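/- (Hard direction of Theorem 1.) Let Σ be a finite alphabet and let f : List Σ → ℝ be a function whose Hankel rank is finite and equal to r. Then there exists a weighted automaton with exactly r states computing f, i.e. there exist α0, α∞ ∈ ℝ^r and matrices M_σ ∈ ℝ^{r×r} for each σ ∈ Σ such that for every string w = σ1…σm one has f(w) = α0ᵀ M_{σ1}·…·M_{σm} α∞ (with the empty product equal to the identity). -/

import Mathlib

open Matrix

/-- hard direction of Theorem 1: if the Hankel rank of `f : List A → ℝ` is
finite and equal to `r`, then there is a weighted automaton with exactly `r` states
computing `f`. -/
theorem wa_exists_of_finite_hankel_rank {A : Type*} [Fintype A]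
    (f : List A → ℝ) (r : ℕ)
    (hr : Module.rank ℝ
        ↥(Submodule.span ℝ
            {g : List A → ℝ | ∃ u : List A, g = fun v : List A => f (u ++ v)}) = r) :
    ∃ (α0 αinf : Fin r → ℝ) (M : A → Matrix (Fin r) (Fin r) ℝ),
      ∀ w : List A, f w = α0 ⬝ᵥ ((w.map M).prod).mulVec αinf := by
  set S : Set (List A → ℝ) := {g | ∃ u : List A, g = fun v => f (u ++ v)} with hS
  set V := Submodule.span ℝ S with hV
  have hfin : Module.Finite ℝ V := Module.finite_of_rank_eq_nat hr
  have hfr : Module.finrank ℝ V = r := Module.finrank_eq_of_rank_eq hr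
  let b : Module.Basis (Fin r) ℝ V := Module.finBasisOfFinrankEq ℝ V hfr
  -- the shift maps
  let sh : A → (List A → ℝ) →ₗ[ℝ] (List A → ℝ) := fun σ =>
    { toFun := fun g v => g (σ :: v)
      map_add' := fun _ _ => rfl
      map_smul' := fun _ _ => rfl }
  have hmap : ∀ σ : A, ∀ x ∈ V, sh σ x ∈ V := by
    intro σ
    have hle : V ≤ V.comap (sh σ) := by
      rw [hV]
      apply Submodule.span_le.2
      rintro g ⟨u, rfl⟩
      apply Submodule.subset_span
      refine ⟨u ++ [σ], ?_⟩
      funext v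
      simp [sh]
    exact fun x hx => hle hx
  let T : A → V →ₗ[ℝ] V := fun σ => (sh σ).restrict (hmap σ)
  let N : A → Matrix (Fin r) (Fin r) ℝ := fun σ => LinearMap.toMatrix b b (T σ)
  let M : A → Matrix (Fin r) (Fin r) ℝ := fun σ => (N σ)ᵀ
  let αinf : Fin r → ℝ := fun i => (b i : List A → ℝ) []
  have key : ∀ (w : List A) (x : V),
      (x : List A → ℝ) w = (b.repr x) ⬝ᵥ ((w.map M).prod).mulVec αinf := by
    intro w
    induction w with
    | nil =>
      intro x
      simp only [List.map_nil, List.prod_nil, Matrix.one_mulVec]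
      have hx := b.sum_repr x
      calc (x : List A → ℝ) [] = ((∑ i, b.repr x i • b i : V) : List A → ℝ) [] := by
            rw [hx]
        _ = ∑ i, b.repr x i * (b i : List A → ℝ) [] := by
            rw [Submodule.coe_sum]
            simp [Finset.sum_apply]
        _ = (b.repr x) ⬝ᵥ αinf := rfl
    | cons σ w ih =>
      intro x
      have h1 : (x : List A → ℝ) (σ :: w) = ((T σ x : V) : List A → ℝ) w := rfl
      rw [h1, ih (T σ x)]
      have h2 : (b.repr (T σ x) : Fin r → ℝ) = (N σ).mulVec (b.repr x) :=
        (LinearMap.toMatrix_mulVec_repr b b (T σ) x).symm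
      rw [h2, List.map_cons, List.prod_cons, ← Matrix.mulVec_mulVec]
      have h3 : ∀ (P : Matrix (Fin r) (Fin r) ℝ) (u y : Fin r → ℝ),
          (P.mulVec u) ⬝ᵥ y = u ⬝ᵥ (Pᵀ.mulVec y) := by
        intro P u y
        rw [dotProduct_comm, Matrix.dotProduct_mulVec, dotProduct_comm]
        rw [← Matrix.mulVec_transpose]
      rw [h3]
  have hfS : f ∈ S := ⟨[], rfl⟩
  have hfV : f ∈ V := Submodule.subset_span hfS
  refine ⟨b.repr ⟨f, hfV⟩, αinf, M, fun w => ?_⟩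
  exact key w ⟨f, hfV⟩
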